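/- arXiv:1605.01171 — 4 statements merged into one kernel-verified Lean document; each statement's English description precedes it below -/
import Mathlib

section
/- The orthogonal projection φ along h_n = (ε_1 + ⋯ + ε_n)/2, given by φ(v) = v − ((v, h_n)/‖h_n‖²)h_n, maps the vertex set {X_S : S ⊆ {1,…,n}} of the B_n Voronoi cell (the n-cube) onto the vertex set of the A_{n−1} Voronoi cell together with the origin; in particular φ(X_{{1,…,n}}) = φ(X_∅) = 0, and for 1 ≤ |S| = k ≤ n−1, φ(X_S) lies in the W(A_{n−1})-orbit of the fundamental weight h_k = (ε_1+⋯+ε_k) − (k/n)Σε_i. -/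
noncomputable section

/-- The Euclidean inner product on `ℝⁿ`. -/
def ip (n : ℕ) (u v : Fin n → ℝ) : ℝ := ∑ i, u i * v i

/-- The fundamental weight `h_n = (ε_1 + ⋯ + ε_n)/2` of `W(B_n)`. -/
def hwB (n : ℕ) : Fin n → ℝ := fun _ => 1 / 2

/-- The orthogonal projection along `h_n`: `φ(v) = v − ((v, h_n)/‖h_n‖²) h_n`. -/
def phi (n : ℕ) (v : Fin n → ℝ) : Fin n → ℝ :=
  v - (ip n v (hwB n) / ip n (hwB n) (hwB n)) • hwB n

/-- The vertex `X_S = (Σ_{i∈S} ε_i − Σ_{i∉S} ε_i)/2` of the `B_n` Voronoi cell. -/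
def XS (n : ℕ) (S : Finset (Fin n)) : Fin n → ℝ :=
  fun i => if i ∈ S then 1 / 2 else -(1 / 2)

/-- The fundamental weight `h_k = (ε_1 + ⋯ + ε_k) − (k/n)Σ_i ε_i` of `W(A_{n−1})`. -/
def hwA (n k : ℕ) : Fin n → ℝ :=
  fun i => (if (i : ℕ) < k then 1 else 0) - (k : ℝ) / (n : ℝ)

/-- The orthogonal projection `φ` along `h_n` maps the vertex set `{X_S}` of the `B_n`
Voronoi cell (the `n`-cube) onto the vertex set of the `A_{n−1}` Voronoi cell together
with the origin: `φ(X_{{1,…,n}}) = φ(X_∅) = 0`, and for `1 ≤ |S| ≤ n−1`, `φ(X_S)` lies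
in the `W(A_{n−1}) ≅ S_n`-orbit (permutations of coordinates) of `h_{|S|}`. -/
theorem stmt_9 (n : ℕ) (hn : 0 < n) :
    phi n (XS n Finset.univ) = 0 ∧ phi n (XS n ∅) = 0 ∧
    ∀ S : Finset (Fin n), 1 ≤ S.card → S.card ≤ n - 1 →
      ∃ σ : Equiv.Perm (Fin n), phi n (XS n S) = fun i => hwA n S.card (σ i) := by

  have hn0 : (n:ℝ) ≠ 0 := Nat.cast_ne_zero.mpr hn.ne'
  have hipB : ip n (hwB n) (hwB n) = n / 4 := by
    simp [ip, hwB]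
    ring
  have hipS : ∀ S : Finset (Fin n), ip n (XS n S) (hwB n) = (2 * S.card - n) / 4 := by
    intro S
    have h1 : ∀ i : Fin n, XS n S i * hwB n i = (if i ∈ S then (1/2:ℝ) else 0) - 1/4 := by
      intro i; simp only [XS, hwB]; split <;> ring
    calc ip n (XS n S) (hwB n)
        = ∑ i, ((if i ∈ S then (1/2:ℝ) else 0) - 1/4) :=
          Finset.sum_congr rfl (fun i _ => h1 i)
      _ = (∑ i, (if i ∈ S then (1/2:ℝ) else 0)) - ∑ _i : Fin n, (1/4:ℝ) :=
          Finset.sum_sub_distrib _ _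
      _ = S.card * (1/2) - n * (1/4) := by
          rw [Finset.sum_ite_mem, Finset.univ_inter, Finset.sum_const, Finset.sum_const]
          simp [mul_comm]
      _ = (2 * S.card - n) / 4 := by ring
  refine ⟨?_, ?_, ?_⟩
  · funext i
    simp only [phi, Pi.sub_apply, Pi.smul_apply, smul_eq_mul, hipB, hipS, Pi.zero_apply,
      Finset.card_univ, Fintype.card_fin, XS, Finset.mem_univ, if_true, hwB]
    field_simp
    ring
  · funext i
    simp only [phi, Pi.sub_apply, Pi.smul_apply, smul_eq_mul, hipB, hipS, Pi.zero_apply,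
      Finset.card_empty, Nat.cast_zero, XS, Finset.notMem_empty, if_false, hwB]
    field_simp
    ring
  · intro S h1 hk
    have hkn : S.card < n := by omega
    have e2 : {x : Fin n // (x:ℕ) < S.card} ≃ Fin S.card :=
      ⟨fun x => ⟨x.1, x.2⟩, fun j => ⟨⟨j, j.2.trans hkn⟩, j.2⟩, fun x => rfl, fun j => rfl⟩
    have e : {x // x ∈ S} ≃ {x : Fin n // (x:ℕ) < S.card} :=
      Fintype.equivOfCardEq (by rw [Fintype.card_coe, Fintype.card_congr e2, Fintype.card_fin])
    refine ⟨e.extendSubtype, ?_⟩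
    funext i
    by_cases hi : i ∈ S
    · have hm : ((e.extendSubtype i : Fin n) : ℕ) < S.card := e.extendSubtype_mem i hi
      simp only [phi, Pi.sub_apply, Pi.smul_apply, smul_eq_mul, hipB, hipS, XS, hwA,
        hwB, hi, if_true, hm]
      field_simp
      ring
    · have hm : ¬ ((e.extendSubtype i : Fin n) : ℕ) < S.card := e.extendSubtype_not_mem i hi
      simp only [phi, Pi.sub_apply, Pi.smul_apply, smul_eq_mul, hipB, hipS, XS, hwA,
        hwB, hi, if_false, hm]
      field_simp
      ring


end
end

section
/- The birational transformations s_1, s_2, s_3 on the field ℂ(a_1,a_2,a_3,x_0,x_1,x_2,x_3) defined by s_1: {x_1 ↔ x_2, a_1 ↔ a_2}, s_2: {x_2 ↔ x_3, a_2 ↔ a_3}, and s_3: {x_0 ↔ x_3, x_1 ↦ x_0(−a_1x_1 + a_3x_3)/(a_3x_1 − a_1x_3), x_2 ↦ x_0(−a_2x_2 + a_3x_3)/(a_3x_2 − a_2x_3), a_1 ↦ −a_1, a_2 ↦ −a_2} satisfy the defining relations of W(B_3): s_1² = s_2² = s_3² = 1, (s_1s_2)³ = 1, (s_1s_3)² =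 1, (s_2s_3)⁴ = 1. -/
set_option maxHeartbeats 2000000
set_option synthInstance.maxHeartbeats 400000


noncomputable section

/-- The field `ℂ(a₁,a₂,a₃,x₀,x₁,x₂,x₃)` of rational functions in seven indeterminates. -/
abbrev K10 := FractionRing (MvPolynomial (Fin 7) ℂ)

/-- The seven generators `a₁, a₂, a₃, x₀, x₁, x₂, x₃` of the rational function field. -/
def g10 (i : Fin 7) : K10 :=
  algebraMap (MvPolynomial (Fin 7) ℂ) K10 (MvPolynomial.X i)

lemma mulapp10 (f g : RingAut K10) (x : K10) : (f * g) x = f (g x) := rfl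

lemma ringaut_eq_one10 (f : RingAut K10)
    (hc : ∀ c : ℂ, f (algebraMap (MvPolynomial (Fin 7) ℂ) K10 (MvPolynomial.C c))
      = algebraMap (MvPolynomial (Fin 7) ℂ) K10 (MvPolynomial.C c))
    (hx : ∀ i, f (g10 i) = g10 i) : f = 1 := by
  have h : (f : K10 →+* K10) = RingHom.id K10 := by
    apply IsLocalization.ringHom_ext (nonZeroDivisors (MvPolynomial (Fin 7) ℂ))
    apply MvPolynomial.ringHom_ext
    · intro c; simpa using hc c
    · intro i; simpa [g10] using hx i
  exact RingEquiv.ext fun x => RingHom.congr_fun h x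

lemma ne10 (p : MvPolynomial (Fin 7) ℂ) (v : Fin 7 → ℂ)
    (h : MvPolynomial.eval v p ≠ 0) :
    algebraMap (MvPolynomial (Fin 7) ℂ) K10 p ≠ 0 := by
  intro h0
  apply h
  have : p = 0 := IsFractionRing.injective (MvPolynomial (Fin 7) ℂ) K10 (by simpa using h0)
  simp [this]

/-- The birational transformations `s₁, s₂, s₃` on `ℂ(a₁,a₂,a₃,x₀,x₁,x₂,x₃)` defined by
`s₁: {x₁ ↔ x₂, a₁ ↔ a₂}`, `s₂: {x₂ ↔ x₃, a₂ ↔ a₃}`, and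
`s₃: {x₀ ↔ x₃, x₁ ↦ x₀(−a₁x₁ + a₃x₃)/(a₃x₁ − a₁x₃),
x₂ ↦ x₀(−a₂x₂ + a₃x₃)/(a₃x₂ − a₂x₃), a₁ ↦ −a₁, a₂ ↦ −a₂}`
(field automorphisms fixing ℂ, determined by these assignments) satisfy the defining
relations of `W(B₃)`: `s₁² = s₂² = s₃² = 1`, `(s₁s₂)³ = 1`, `(s₁s₃)² = 1`,
`(s₂s₃)⁴ = 1`. -/
theorem stmt_10 (s1 s2 s3 : RingAut K10)
    -- generators: a₁ = g10 0, a₂ = g10 1, a₃ = g10 2, x₀ = g10 3, x₁ = g10 4,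
    -- x₂ = g10 5, x₃ = g10 6
    (hC : ∀ (s : RingAut K10), s = s1 ∨ s = s2 ∨ s = s3 → ∀ c : ℂ,
      s (algebraMap (MvPolynomial (Fin 7) ℂ) K10 (MvPolynomial.C c))
        = algebraMap (MvPolynomial (Fin 7) ℂ) K10 (MvPolynomial.C c))
    (hs1 : s1 (g10 4) = g10 5 ∧ s1 (g10 5) = g10 4 ∧
      s1 (g10 0) = g10 1 ∧ s1 (g10 1) = g10 0 ∧
      s1 (g10 2) = g10 2 ∧ s1 (g10 3) = g10 3 ∧ s1 (g10 6) = g10 6)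
    (hs2 : s2 (g10 5) = g10 6 ∧ s2 (g10 6) = g10 5 ∧
      s2 (g10 1) = g10 2 ∧ s2 (g10 2) = g10 1 ∧
      s2 (g10 0) = g10 0 ∧ s2 (g10 3) = g10 3 ∧ s2 (g10 4) = g10 4)
    (hs3 : s3 (g10 3) = g10 6 ∧ s3 (g10 6) = g10 3 ∧
      s3 (g10 4) = g10 3 * (-(g10 0) * g10 4 + g10 2 * g10 6) /
        (g10 2 * g10 4 - g10 0 * g10 6) ∧
      s3 (g10 5) = g10 3 * (-(g10 1) * g10 5 + g10 2 * g10 6) /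
        (g10 2 * g10 5 - g10 1 * g10 6) ∧
      s3 (g10 0) = -(g10 0) ∧ s3 (g10 1) = -(g10 1) ∧ s3 (g10 2) = g10 2) :
    s1 ^ 2 = 1 ∧ s2 ^ 2 = 1 ∧ s3 ^ 2 = 1 ∧
      (s1 * s2) ^ 3 = 1 ∧ (s1 * s3) ^ 2 = 1 ∧ (s2 * s3) ^ 4 = 1 := by
  obtain ⟨h1y, h1z, h1a, h1b, h1c, h1x, h1w⟩ := hs1
  obtain ⟨h2z, h2w, h2b, h2c, h2a, h2x, h2y⟩ := hs2
  obtain ⟨h3x, h3w, h3y, h3z, h3a, h3b, h3c⟩ := hs3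
  have hc1 := hC s1 (Or.inl rfl)
  have hc2 := hC s2 (Or.inr (Or.inl rfl))
  have hc3 := hC s3 (Or.inr (Or.inr rfl))
  -- nonzero denominators
  have hq : g10 2 * g10 4 - g10 0 * g10 6 ≠ 0 := by
    have := ne10 (MvPolynomial.X 2 * MvPolynomial.X 4 - MvPolynomial.X 0 * MvPolynomial.X 6)
      (fun i => if i = 2 ∨ i = 4 then 1 else 0) (by simp; try norm_num)
    simpa [g10] using this
  have hr : g10 2 * g10 5 - g10 1 * g10 6 ≠ 0 := by
    have := ne10 (MvPolynomial.X 2 * MvPolynomial.X 5 - MvPolynomial.X 1 * MvPolynomial.X 6)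
      (fun i => if i = 2 ∨ i = 5 then 1 else 0) (by simp; try norm_num)
    simpa [g10] using this
  have he : g10 1 * g10 4 - g10 0 * g10 5 ≠ 0 := by
    have := ne10 (MvPolynomial.X 1 * MvPolynomial.X 4 - MvPolynomial.X 0 * MvPolynomial.X 5)
      (fun i => if i = 1 ∨ i = 4 then 1 else 0) (by simp; try norm_num)
    simpa [g10] using this
  have hd : g10 1 * g10 6 - g10 2 * g10 5 ≠ 0 := by
    have := ne10 (MvPolynomial.X 1 * MvPolynomial.X 6 - MvPolynomial.X 2 * MvPolynomial.X 5)
      (fun i => if i = 1 ∨ i = 6 then 1 else 0) (by simp; try norm_num)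
    simpa [g10] using this
  have hD : g10 0 * g10 4 * (g10 1 ^ 2 - g10 2 ^ 2) + g10 1 * g10 5 * (g10 2 ^ 2 - g10 0 ^ 2)
      + g10 2 * g10 6 * (g10 0 ^ 2 - g10 1 ^ 2) ≠ 0 := by
    have := ne10 (MvPolynomial.X 0 * MvPolynomial.X 4 * (MvPolynomial.X 1 ^ 2 - MvPolynomial.X 2 ^ 2)
      + MvPolynomial.X 1 * MvPolynomial.X 5 * (MvPolynomial.X 2 ^ 2 - MvPolynomial.X 0 ^ 2) + MvPolynomial.X 2 * MvPolynomial.X 6 * (MvPolynomial.X 0 ^ 2 - MvPolynomial.X 1 ^ 2))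
      (fun i => if i = 0 ∨ i = 1 ∨ i = 4 then 1 else 0) (by simp; try norm_num)
    simpa [g10] using this
  refine ⟨?_, ?_, ?_, ?_, ?_, ?_⟩
  · -- s1 ^ 2 = 1
    apply ringaut_eq_one10
    · intro c; rw [sq, mulapp10, hc1, hc1]
    · intro i
      fin_cases i <;> rw [sq, mulapp10]
      · show s1 (s1 (g10 0)) = g10 0; rw [h1a, h1b]
      · show s1 (s1 (g10 1)) = g10 1; rw [h1b, h1a]
      · show s1 (s1 (g10 2)) = g10 2; rw [h1c, h1c]
      · show s1 (s1 (g10 3)) = g10 3; rw [h1x, h1x]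
      · show s1 (s1 (g10 4)) = g10 4; rw [h1y, h1z]
      · show s1 (s1 (g10 5)) = g10 5; rw [h1z, h1y]
      · show s1 (s1 (g10 6)) = g10 6; rw [h1w, h1w]
  · -- s2 ^ 2 = 1
    apply ringaut_eq_one10
    · intro c; rw [sq, mulapp10, hc2, hc2]
    · intro i
      fin_cases i <;> rw [sq, mulapp10]
      · show s2 (s2 (g10 0)) = g10 0; rw [h2a, h2a]
      · show s2 (s2 (g10 1)) = g10 1; rw [h2b, h2c]
      · show s2 (s2 (g10 2)) = g10 2; rw [h2c, h2b]
      · show s2 (s2 (g10 3)) = g10 3; rw [h2x, h2x]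
      · show s2 (s2 (g10 4)) = g10 4; rw [h2y, h2y]
      · show s2 (s2 (g10 5)) = g10 5; rw [h2z, h2w]
      · show s2 (s2 (g10 6)) = g10 6; rw [h2w, h2z]
  · -- s3 ^ 2 = 1
    apply ringaut_eq_one10
    · intro c; rw [sq, mulapp10, hc3, hc3]
    · have SQy := (map_ne_zero_iff s3 s3.injective).mpr hq
      simp only [map_div₀, map_mul, map_add, map_sub, map_neg, neg_neg, h3x, h3w, h3a, h3b, h3c, h3y, h3z] at SQy
      have SQz := (map_ne_zero_iff s3 s3.injective).mpr hr
      simp only [map_div₀, map_mul, map_add, map_sub, map_neg, neg_neg, h3x, h3w, h3a, h3b, h3c, h3y, h3z] at SQz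
      intro i
      fin_cases i <;> rw [sq, mulapp10]
      · show s3 (s3 (g10 0)) = g10 0; rw [h3a, map_neg, h3a, neg_neg]
      · show s3 (s3 (g10 1)) = g10 1; rw [h3b, map_neg, h3b, neg_neg]
      · show s3 (s3 (g10 2)) = g10 2; rw [h3c, h3c]
      · show s3 (s3 (g10 3)) = g10 3; rw [h3x, h3w]
      · show s3 (s3 (g10 4)) = g10 4
        rw [h3y]
        simp only [map_div₀, map_mul, map_add, map_sub, map_neg, neg_neg, h3x, h3w, h3a, h3b, h3c, h3y, h3z]
        rw [div_eq_iff SQy]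
        field_simp at hq ⊢
        ring
      · show s3 (s3 (g10 5)) = g10 5
        rw [h3z]
        simp only [map_div₀, map_mul, map_add, map_sub, map_neg, neg_neg, h3x, h3w, h3a, h3b, h3c, h3y, h3z]
        rw [div_eq_iff SQz]
        field_simp at hr ⊢
        ring
      · show s3 (s3 (g10 6)) = g10 6; rw [h3w, h3x]
  · -- (s1 * s2) ^ 3 = 1
    apply ringaut_eq_one10
    · intro c
      show s1 (s2 (s1 (s2 (s1 (s2 _))))) = _
      rw [hc2, hc1, hc2, hc1, hc2, hc1]
    · intro i
      have h6 : ∀ k : K10, ((s1 * s2) ^ 3) k = s1 (s2 (s1 (s2 (s1 (s2 k))))) := fun k => rfl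
      fin_cases i <;> rw [h6]
      · show s1 (s2 (s1 (s2 (s1 (s2 (g10 0)))))) = g10 0
        rw [h2a, h1a, h2b, h1c, h2c, h1b]
      · show s1 (s2 (s1 (s2 (s1 (s2 (g10 1)))))) = g10 1
        rw [h2b, h1c, h2c, h1b, h2a, h1a]
      · show s1 (s2 (s1 (s2 (s1 (s2 (g10 2)))))) = g10 2
        rw [h2c, h1b, h2a, h1a, h2b, h1c]
      · show s1 (s2 (s1 (s2 (s1 (s2 (g10 3)))))) = g10 3
        rw [h2x, h1x, h2x, h1x, h2x, h1x]
      · show s1 (s2 (s1 (s2 (s1 (s2 (g10 4)))))) = g10 4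
        rw [h2y, h1y, h2z, h1w, h2w, h1z]
      · show s1 (s2 (s1 (s2 (s1 (s2 (g10 5)))))) = g10 5
        rw [h2z, h1w, h2w, h1z, h2y, h1y]
      · show s1 (s2 (s1 (s2 (s1 (s2 (g10 6)))))) = g10 6
        rw [h2w, h1z, h2y, h1y, h2z, h1w]
  · -- (s1 * s3) ^ 2 = 1
    apply ringaut_eq_one10
    · intro c
      show s1 (s3 (s1 (s3 _))) = _
      rw [hc3, hc1, hc3, hc1]
    · have Oy := (map_ne_zero_iff s1 s1.injective).mpr
        ((map_ne_zero_iff s3 s3.injective).mpr hr)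
      simp only [map_div₀, map_mul, map_add, map_sub, map_neg, neg_neg, h3x, h3w, h3a, h3b, h3c, h3y, h3z, h1a, h1b, h1c, h1x, h1y, h1z, h1w] at Oy
      have Oz := (map_ne_zero_iff s1 s1.injective).mpr
        ((map_ne_zero_iff s3 s3.injective).mpr hq)
      simp only [map_div₀, map_mul, map_add, map_sub, map_neg, neg_neg, h3x, h3w, h3a, h3b, h3c, h3y, h3z, h1a, h1b, h1c, h1x, h1y, h1z, h1w] at Oz
      intro i
      have h4 : ∀ k : K10, ((s1 * s3) ^ 2) k = s1 (s3 (s1 (s3 k))) := fun k => rfl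
      fin_cases i <;> rw [h4]
      · show s1 (s3 (s1 (s3 (g10 0)))) = g10 0
        simp only [h3a, h3b, map_neg, h1a, h1b, neg_neg]
      · show s1 (s3 (s1 (s3 (g10 1)))) = g10 1
        simp only [h3a, h3b, map_neg, h1a, h1b, neg_neg]
      · show s1 (s3 (s1 (s3 (g10 2)))) = g10 2
        rw [h3c, h1c, h3c, h1c]
      · show s1 (s3 (s1 (s3 (g10 3)))) = g10 3
        rw [h3x, h1w, h3w, h1x]
      · show s1 (s3 (s1 (s3 (g10 4)))) = g10 4
        rw [h3y]
        simp only [map_div₀, map_mul, map_add, map_sub, map_neg, neg_neg, h3x, h3w, h3a, h3b, h3c, h3y, h3z, h1a, h1b, h1c, h1x, h1y, h1z, h1w]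
        rw [div_eq_iff Oy]
        field_simp at hq ⊢
        ring
      · show s1 (s3 (s1 (s3 (g10 5)))) = g10 5
        rw [h3z]
        simp only [map_div₀, map_mul, map_add, map_sub, map_neg, neg_neg, h3x, h3w, h3a, h3b, h3c, h3y, h3z, h1a, h1b, h1c, h1x, h1y, h1z, h1w]
        rw [div_eq_iff Oz]
        field_simp at hr ⊢
        ring
      · show s1 (s3 (s1 (s3 (g10 6)))) = g10 6
        rw [h3w, h1x, h3x, h1w]
  · -- (s2 * s3) ^ 4 = 1
    have hv4 : (s2 * s3) ^ 4 = (s2 * s3 * s2 * s3) * (s2 * s3 * s2 * s3) := by simp only [pow_succ, pow_zero, one_mul, mul_assoc]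
    set v : RingAut K10 := s2 * s3 * s2 * s3 with hv
    have vapp : ∀ k : K10, v k = s2 (s3 (s2 (s3 k))) := fun k => rfl
    have hvcC : ∀ c : ℂ, v (algebraMap (MvPolynomial (Fin 7) ℂ) K10 (MvPolynomial.C c))
        = algebraMap (MvPolynomial (Fin 7) ℂ) K10 (MvPolynomial.C c) := by
      intro c; rw [vapp, hc3, hc2, hc3, hc2]
    have hva : v (g10 0) = g10 0 := by
      rw [vapp, h3a, map_neg, h2a, map_neg, h3a, neg_neg, h2a]
    have hvb : v (g10 1) = -(g10 1) := by
      rw [vapp, h3b, map_neg, h2b, map_neg, h3c, map_neg, h2c]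
    have hvc2 : v (g10 2) = -(g10 2) := by
      rw [vapp, h3c, h2c, h3b, map_neg, h2b]
    have hvw : v (g10 6) = g10 5 := by
      rw [vapp, h3w, h2x, h3x, h2w]
    have hvz : v (g10 5) = g10 6 := by
      have O := (map_ne_zero_iff s2 s2.injective).mpr
        ((map_ne_zero_iff s3 s3.injective).mpr hd)
      simp only [map_div₀, map_mul, map_add, map_sub, map_neg, neg_neg, h3x, h3w, h3a, h3b, h3c, h3y, h3z, h2a, h2b, h2c, h2x, h2y, h2z, h2w] at O
      rw [vapp, h3z]
      simp only [map_div₀, map_mul, map_add, map_sub, map_neg, neg_neg, h3x, h3w, h3a, h3b, h3c, h3y, h3z, h2a, h2b, h2c, h2x, h2y, h2z, h2w]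
      rw [div_eq_iff O]
      field_simp at hd ⊢
      ring
    have hvx : v (g10 3) = g10 3 * (g10 1 * g10 5 - g10 2 * g10 6) /
        (g10 1 * g10 6 - g10 2 * g10 5) := by
      rw [vapp, h3x, h2w, h3z]
      simp only [map_div₀, map_mul, map_add, map_sub, map_neg, neg_neg, h3x, h3w, h3a, h3b, h3c, h3y, h3z, h2a, h2b, h2c, h2x, h2y, h2z, h2w]
      rw [div_eq_div_iff hd hd]
      ring
    have hvy : v (g10 4) = (g10 1 * g10 4 * g10 6 * (g10 2 ^ 2 - g10 0 ^ 2)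
          + g10 2 * g10 4 * g10 5 * (g10 0 ^ 2 - g10 1 ^ 2)
          + g10 0 * g10 5 * g10 6 * (g10 1 ^ 2 - g10 2 ^ 2)) /
        (g10 0 * g10 4 * (g10 1 ^ 2 - g10 2 ^ 2) + g10 1 * g10 5 * (g10 2 ^ 2 - g10 0 ^ 2)
          + g10 2 * g10 6 * (g10 0 ^ 2 - g10 1 ^ 2)) := by
      have O := (map_ne_zero_iff s2 s2.injective).mpr
        ((map_ne_zero_iff s3 s3.injective).mpr he)
      simp only [map_div₀, map_mul, map_add, map_sub, map_neg, neg_neg, h3x, h3w, h3a, h3b, h3c, h3y, h3z, h2a, h2b, h2c, h2x, h2y, h2z, h2w] at O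
      rw [vapp, h3y]
      simp only [map_div₀, map_mul, map_add, map_sub, map_neg, neg_neg, h3x, h3w, h3a, h3b, h3c, h3y, h3z, h2a, h2b, h2c, h2x, h2y, h2z, h2w]
      rw [div_eq_iff O]
      field_simp at he hd hD ⊢
      ring
    rw [hv4]
    apply ringaut_eq_one10
    · intro c; rw [mulapp10, hvcC, hvcC]
    · have VD := (map_ne_zero_iff v v.injective).mpr hD
      simp only [map_div₀, map_mul, map_add, map_sub, map_neg, map_pow, neg_neg, neg_sq, hva, hvb, hvc2, hvx, hvy, hvz, hvw] at VD
      have VD2 := (map_ne_zero_iff v v.injective).mpr hd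
      simp only [map_div₀, map_mul, map_add, map_sub, map_neg, map_pow, neg_neg, neg_sq, hva, hvb, hvc2, hvx, hvy, hvz, hvw] at VD2
      intro i
      fin_cases i <;> rw [mulapp10]
      · show v (v (g10 0)) = g10 0; rw [hva, hva]
      · show v (v (g10 1)) = g10 1; rw [hvb, map_neg, hvb, neg_neg]
      · show v (v (g10 2)) = g10 2; rw [hvc2, map_neg, hvc2, neg_neg]
      · show v (v (g10 3)) = g10 3
        rw [hvx]
        simp only [map_div₀, map_mul, map_add, map_sub, map_neg, map_pow, neg_neg, neg_sq, hva, hvb, hvc2, hvx, hvy, hvz, hvw]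
        rw [div_eq_iff VD2]
        field_simp at hd ⊢
        ring
      · show v (v (g10 4)) = g10 4
        rw [hvy]
        simp only [map_div₀, map_mul, map_add, map_sub, map_neg, map_pow, neg_neg, neg_sq, hva, hvb, hvc2, hvx, hvy, hvz, hvw]
        rw [div_eq_iff VD]
        field_simp at hD ⊢
        ring
      · show v (v (g10 5)) = g10 5; rw [hvz, hvw]
      · show v (v (g10 6)) = g10 6; rw [hvw, hvz]

end
end

section
/- On the reduced lattice system, setting f = u_1/u_{12} and g = u_{12}/u_0, the relations u_{112} = u_0(qa_1u_1 + a_3u_{12})/(a_3u_1 + qa_1u_{12}) and u_{11} = (a_2 u_1 u_{12} + qa_1 u_{12} u_{112})/(qa_1 u_1 + a_2 u_{112}) imply the q-Painlevé III system: ḡ = (1 + f t)/(f g (f + t)) and f̄ = (1 + a ḡ t)/(f ḡ (ḡ + a t)), where t = qa_1/a_3, a = a_3/a_2, f̄ = u_{11}/u_{112}, ḡ = u_{112}/u_1. -/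
/-- On the reduced lattice system, setting `f = u₁/u₁₂` and `g = u₁₂/u₀`, the relations
`u₁₁₂ = u₀(qa₁u₁ + a₃u₁₂)/(a₃u₁ + qa₁u₁₂)` and
`u₁₁ = (a₂u₁u₁₂ + qa₁u₁₂u₁₁₂)/(qa₁u₁ + a₂u₁₁₂)` imply the q-Painlevé III system
`ḡ = (1 + ft)/(fg(f + t))` and `f̄ = (1 + aḡt)/(fḡ(ḡ + at))`, where `t = qa₁/a₃`,
`a = a₃/a₂`, `f̄ = u₁₁/u₁₁₂`, `ḡ = u₁₁₂/u₁`. -/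
theorem stmt_12 {F : Type*} [Field F]
    (u0 u1 u12 u112 u11 a1 a2 a3 q : F)
    (hu0 : u0 ≠ 0) (hu1 : u1 ≠ 0) (hu12 : u12 ≠ 0) (hu112 : u112 ≠ 0)
    (ha1 : a1 ≠ 0) (ha2 : a2 ≠ 0) (ha3 : a3 ≠ 0) (hq : q ≠ 0)
    (hden1 : a3 * u1 + q * a1 * u12 ≠ 0)
    (hden2 : q * a1 * u1 + a2 * u112 ≠ 0)
    (h112 : u112 = u0 * (q * a1 * u1 + a3 * u12) / (a3 * u1 + q * a1 * u12))
    (h11 : u11 = (a2 * u1 * u12 + q * a1 * u12 * u112) / (q * a1 * u1 + a2 * u112))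
    (f g t a fb gb : F)
    (hf : f = u1 / u12) (hg : g = u12 / u0)
    (ht : t = q * a1 / a3) (ha : a = a3 / a2)
    (hfb : fb = u11 / u112) (hgb : gb = u112 / u1) :
    gb = (1 + f * t) / (f * g * (f + t)) ∧
      fb = (1 + a * gb * t) / (f * gb * (gb + a * t)) := by
  have hN1 : q * a1 * u1 + a3 * u12 ≠ 0 := by
    intro h
    apply hu112
    rw [h112, h, mul_zero, zero_div]
  have h112' : u112 * (a3 * u1 + q * a1 * u12) = u0 * (q * a1 * u1 + a3 * u12) := by
    rw [h112, div_mul_cancel₀ _ hden1]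
  have h11' : u11 * (q * a1 * u1 + a2 * u112) = a2 * u1 * u12 + q * a1 * u12 * u112 := by
    rw [h11, div_mul_cancel₀ _ hden2]
  have hD1 : a3*u12^2*q*a1*u1 + a3^2*u12*u1^2 ≠ 0 := by
    have : a3*u12^2*q*a1*u1 + a3^2*u12*u1^2 = a3*u12*u1*(q*a1*u12 + a3*u1) := by ring
    rw [this]
    exact mul_ne_zero (mul_ne_zero (mul_ne_zero ha3 hu12) hu1)
      (by rw [add_comm]; exact hden1)
  have hD2 : a2*u1^3*a3^2*u112*q*a1 + a2^2*u1^2*a3^2*u112^2 ≠ 0 := by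
    have : a2*u1^3*a3^2*u112*q*a1 + a2^2*u1^2*a3^2*u112^2
        = a2*u1^2*a3^2*u112*(u1*q*a1 + a2*u112) := by ring
    rw [this]
    refine mul_ne_zero (mul_ne_zero (mul_ne_zero (mul_ne_zero ha2 (pow_ne_zero _ hu1)) (pow_ne_zero _ ha3)) hu112) ?_
    intro h; apply hden2; linear_combination h
  have hsum1 : u1 / u12 + q * a1 / a3 ≠ 0 := by
    rw [div_add_div _ _ hu12 ha3, div_ne_zero_iff]
    exact ⟨by intro h; exact hden1 (by linear_combination h), mul_ne_zero hu12 ha3⟩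
  have hsum2 : u112 / u1 + (a3 / a2) * (q * a1 / a3) ≠ 0 := by
    have : u112 / u1 + (a3 / a2) * (q * a1 / a3) = (a2 * u112 + q * a1 * u1) / (a2 * u1) := by
      field_simp
    rw [this, div_ne_zero_iff]
    exact ⟨by intro h; exact hden2 (by linear_combination h), mul_ne_zero ha2 hu1⟩
  subst hf hg ht ha hfb hgb
  refine ⟨?_, ?_⟩
  · rw [div_eq_div_iff hu1 (mul_ne_zero (mul_ne_zero (div_ne_zero hu1 hu12)
      (div_ne_zero hu12 hu0)) hsum1)]
    field_simp
    linear_combination h112'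
  · rw [div_eq_div_iff hu112 (mul_ne_zero (mul_ne_zero (div_ne_zero hu1 hu12)
      (div_ne_zero hu112 hu1)) hsum2)]
    field_simp
    linear_combination h11'
end

section
/- The reflections s_i (for α_0, α_1, α_2) and w_j (for β_0, β_1), defined on Pic(X) by v.s = v − (2(v|γ)/(γ|γ))γ, together with the lattice automorphism σ defined by (H_1,H_2,E_1,…,E_8).σ = (H_2, H_1+H_2−E_3−E_6, E_2, E_7, H_2−E_3, E_5, E_8, H_2−E_6, E_4, E_1), satisfy: σ preserves the intersection form and the anti-canonical class, σ⁶ = 1, s_i σ = σ s_{i+1} (indices mod 3), and w_j σ = σ w_{j+1} (indices mod 2). -/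
noncomputable section

/-- The Picard lattice `Pic(X) = ℤH₁ ⊕ ℤH₂ ⊕ ⊕ᵢℤEᵢ` (with ℚ coefficients), in the
basis `(H₁, H₂, E₁, …, E₈)`. -/
abbrev PicX := Fin 10 → ℚ

/-- Basis vector. -/
def bvec (i : Fin 10) : PicX := fun j => if j = i then 1 else 0

/-- `H₁`. -/
def Hv1 : PicX := bvec 0

/-- `H₂`. -/
def Hv2 : PicX := bvec 1

/-- `E_{k+1}` for `k : Fin 8`. -/
def Ev (k : Fin 8) : PicX := bvec ⟨(k : ℕ) + 2, by omega⟩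

/-- The intersection form: `(Hᵢ|Hⱼ) = 1 − δᵢⱼ`, `(Hᵢ|Eⱼ) = 0`, `(Eᵢ|Eⱼ) = −δᵢⱼ`. -/
def IB (u v : PicX) : ℚ :=
  u 0 * v 1 + u 1 * v 0 - ∑ k : Fin 8,
    u ⟨(k : ℕ) + 2, by omega⟩ * v ⟨(k : ℕ) + 2, by omega⟩

/-- The classes `D₀ = E₆ − E₈`, `D₁ = H₂ − E₁ − E₆`, `D₂ = H₁ − E₂ − E₃`,
`D₃ = E₃ − E₇`, `D₄ = H₂ − E₃ − E₄`, `D₅ = H₁ − E₅ − E₆`. -/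
def Dv : Fin 6 → PicX :=
  ![Ev 5 - Ev 7, Hv2 - Ev 0 - Ev 5, Hv1 - Ev 1 - Ev 2,
    Ev 2 - Ev 6, Hv2 - Ev 2 - Ev 3, Hv1 - Ev 4 - Ev 5]

/-- The simple roots `α₀ = H₁ − E₁ − E₄`, `α₁ = H₂ − E₂ − E₅`,
`α₂ = H₁ + H₂ − E₃ − E₆ − E₇ − E₈`. -/
def av : Fin 3 → PicX :=
  ![Hv1 - Ev 0 - Ev 3, Hv2 - Ev 1 - Ev 4, Hv1 + Hv2 - Ev 2 - Ev 5 - Ev 6 - Ev 7]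

/-- The simple roots `β₀ = H₁ + H₂ − E₂ − E₄ − E₆ − E₈`,
`β₁ = H₁ + H₂ − E₁ − E₃ − E₅ − E₇`. -/
def btv : Fin 2 → PicX :=
  ![Hv1 + Hv2 - Ev 1 - Ev 3 - Ev 5 - Ev 7, Hv1 + Hv2 - Ev 0 - Ev 2 - Ev 4 - Ev 6]

/-- The anti-canonical class `−K_X = 2H₁ + 2H₂ − ΣEᵢ`. -/
def antiK : PicX := (2 : ℚ) • Hv1 + (2 : ℚ) • Hv2 - ∑ k : Fin 8, Ev k


/-- The reflection `v ↦ v − (2(v|γ)/(γ|γ))γ` associated to a class `γ`. -/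
def sRef (γ : PicX) (v : PicX) : PicX := v - (2 * IB v γ / IB γ γ) • γ

/-- The images of the basis `(H₁,H₂,E₁,…,E₈)` under the diagram automorphism `σ`:
`(H₂, H₁+H₂−E₃−E₆, E₂, E₇, H₂−E₃, E₅, E₈, H₂−E₆, E₄, E₁)`. -/
def sigImg : Fin 10 → PicX :=
  ![Hv2, Hv1 + Hv2 - Ev 2 - Ev 5, Ev 1, Ev 6, Hv2 - Ev 2,
    Ev 4, Ev 7, Hv2 - Ev 5, Ev 3, Ev 0]

/-- The lattice automorphism `σ`, extended linearly from its values on the basis. -/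
def sigMap (v : PicX) : PicX := ∑ i : Fin 10, v i • sigImg i


lemma s10 (g : Fin 10 → ℚ) : ∑ k, g k =
    g 0 + (g 1 + (g 2 + (g 3 + (g 4 + (g 5 + (g 6 + (g 7 + (g 8 + (g 9 + 0))))))))) := rfl

lemma s8 (g : Fin 8 → ℚ) : ∑ k, g k =
    g 0 + (g 1 + (g 2 + (g 3 + (g 4 + (g 5 + (g 6 + (g 7 + 0))))))) := rfl

lemma IB_eq (u v : PicX) : IB u v = u 0 * v 1 + u 1 * v 0 -
    (u 2 * v 2 + (u 3 * v 3 + (u 4 * v 4 + (u 5 * v 5 +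
      (u 6 * v 6 + (u 7 * v 7 + (u 8 * v 8 + (u 9 * v 9 + 0)))))))) := rfl

section vec
variable {α : Type*} (a0 a1 a2 a3 a4 a5 a6 a7 a8 a9 : α)
lemma v10_0 : (![a0,a1,a2,a3,a4,a5,a6,a7,a8,a9] : Fin 10 → α) 0 = a0 := rfl
lemma v10_1 : (![a0,a1,a2,a3,a4,a5,a6,a7,a8,a9] : Fin 10 → α) 1 = a1 := rfl
lemma v10_2 : (![a0,a1,a2,a3,a4,a5,a6,a7,a8,a9] : Fin 10 → α) 2 = a2 := rfl
lemma v10_3 : (![a0,a1,a2,a3,a4,a5,a6,a7,a8,a9] : Fin 10 → α) 3 = a3 := rfl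
lemma v10_4 : (![a0,a1,a2,a3,a4,a5,a6,a7,a8,a9] : Fin 10 → α) 4 = a4 := rfl
lemma v10_5 : (![a0,a1,a2,a3,a4,a5,a6,a7,a8,a9] : Fin 10 → α) 5 = a5 := rfl
lemma v10_6 : (![a0,a1,a2,a3,a4,a5,a6,a7,a8,a9] : Fin 10 → α) 6 = a6 := rfl
lemma v10_7 : (![a0,a1,a2,a3,a4,a5,a6,a7,a8,a9] : Fin 10 → α) 7 = a7 := rfl
lemma v10_8 : (![a0,a1,a2,a3,a4,a5,a6,a7,a8,a9] : Fin 10 → α) 8 = a8 := rfl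
lemma v10_9 : (![a0,a1,a2,a3,a4,a5,a6,a7,a8,a9] : Fin 10 → α) 9 = a9 := rfl
lemma v3_0 : (![a0,a1,a2] : Fin 3 → α) 0 = a0 := rfl
lemma v3_1 : (![a0,a1,a2] : Fin 3 → α) 1 = a1 := rfl
lemma v3_2 : (![a0,a1,a2] : Fin 3 → α) 2 = a2 := rfl
lemma v2_0 : (![a0,a1] : Fin 2 → α) 0 = a0 := rfl
lemma v2_1 : (![a0,a1] : Fin 2 → α) 1 = a1 := rfl
end vec

lemma sig0 (v : PicX) : sigMap v 0 = v 1 := by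
  rw [sigMap, Finset.sum_apply, s10]
  simp +decide [sigImg, v10_0, v10_1, v10_2, v10_3, v10_4, v10_5, v10_6, v10_7, v10_8, v10_9,
    Pi.sub_apply, Pi.add_apply, Pi.smul_apply, smul_eq_mul, Hv1, Hv2, Ev, bvec]
  try ring
lemma sig1 (v : PicX) : sigMap v 1 = v 0 + v 1 + v 4 + v 7 := by
  rw [sigMap, Finset.sum_apply, s10]
  simp +decide [sigImg, v10_0, v10_1, v10_2, v10_3, v10_4, v10_5, v10_6, v10_7, v10_8, v10_9,
    Pi.sub_apply, Pi.add_apply, Pi.smul_apply, smul_eq_mul, Hv1, Hv2, Ev, bvec]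
  try ring
lemma sig2 (v : PicX) : sigMap v 2 = v 9 := by
  rw [sigMap, Finset.sum_apply, s10]
  simp +decide [sigImg, v10_0, v10_1, v10_2, v10_3, v10_4, v10_5, v10_6, v10_7, v10_8, v10_9,
    Pi.sub_apply, Pi.add_apply, Pi.smul_apply, smul_eq_mul, Hv1, Hv2, Ev, bvec]
  try ring
lemma sig3 (v : PicX) : sigMap v 3 = v 2 := by
  rw [sigMap, Finset.sum_apply, s10]
  simp +decide [sigImg, v10_0, v10_1, v10_2, v10_3, v10_4, v10_5, v10_6, v10_7, v10_8, v10_9,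
    Pi.sub_apply, Pi.add_apply, Pi.smul_apply, smul_eq_mul, Hv1, Hv2, Ev, bvec]
  try ring
lemma sig4 (v : PicX) : sigMap v 4 = -v 1 - v 4 := by
  rw [sigMap, Finset.sum_apply, s10]
  simp +decide [sigImg, v10_0, v10_1, v10_2, v10_3, v10_4, v10_5, v10_6, v10_7, v10_8, v10_9,
    Pi.sub_apply, Pi.add_apply, Pi.smul_apply, smul_eq_mul, Hv1, Hv2, Ev, bvec]
  try ring
lemma sig5 (v : PicX) : sigMap v 5 = v 8 := by
  rw [sigMap, Finset.sum_apply, s10]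
  simp +decide [sigImg, v10_0, v10_1, v10_2, v10_3, v10_4, v10_5, v10_6, v10_7, v10_8, v10_9,
    Pi.sub_apply, Pi.add_apply, Pi.smul_apply, smul_eq_mul, Hv1, Hv2, Ev, bvec]
  try ring
lemma sig6 (v : PicX) : sigMap v 6 = v 5 := by
  rw [sigMap, Finset.sum_apply, s10]
  simp +decide [sigImg, v10_0, v10_1, v10_2, v10_3, v10_4, v10_5, v10_6, v10_7, v10_8, v10_9,
    Pi.sub_apply, Pi.add_apply, Pi.smul_apply, smul_eq_mul, Hv1, Hv2, Ev, bvec]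
  try ring
lemma sig7 (v : PicX) : sigMap v 7 = -v 1 - v 7 := by
  rw [sigMap, Finset.sum_apply, s10]
  simp +decide [sigImg, v10_0, v10_1, v10_2, v10_3, v10_4, v10_5, v10_6, v10_7, v10_8, v10_9,
    Pi.sub_apply, Pi.add_apply, Pi.smul_apply, smul_eq_mul, Hv1, Hv2, Ev, bvec]
  try ring
lemma sig8 (v : PicX) : sigMap v 8 = v 3 := by
  rw [sigMap, Finset.sum_apply, s10]
  simp +decide [sigImg, v10_0, v10_1, v10_2, v10_3, v10_4, v10_5, v10_6, v10_7, v10_8, v10_9,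
    Pi.sub_apply, Pi.add_apply, Pi.smul_apply, smul_eq_mul, Hv1, Hv2, Ev, bvec]
  try ring
lemma sig9 (v : PicX) : sigMap v 9 = v 6 := by
  rw [sigMap, Finset.sum_apply, s10]
  simp +decide [sigImg, v10_0, v10_1, v10_2, v10_3, v10_4, v10_5, v10_6, v10_7, v10_8, v10_9,
    Pi.sub_apply, Pi.add_apply, Pi.smul_apply, smul_eq_mul, Hv1, Hv2, Ev, bvec]
  try ring
lemma av0_0 : av 0 0 = (1 : ℚ) := by
  simp +decide [av, v3_0, Pi.sub_apply, Pi.add_apply, Pi.smul_apply, smul_eq_mul, Hv1, Hv2, Ev, bvec]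
lemma av0_1 : av 0 1 = (0 : ℚ) := by
  simp +decide [av, v3_0, Pi.sub_apply, Pi.add_apply, Pi.smul_apply, smul_eq_mul, Hv1, Hv2, Ev, bvec]
lemma av0_2 : av 0 2 = (-1 : ℚ) := by
  simp +decide [av, v3_0, Pi.sub_apply, Pi.add_apply, Pi.smul_apply, smul_eq_mul, Hv1, Hv2, Ev, bvec]
lemma av0_3 : av 0 3 = (0 : ℚ) := by
  simp +decide [av, v3_0, Pi.sub_apply, Pi.add_apply, Pi.smul_apply, smul_eq_mul, Hv1, Hv2, Ev, bvec]
lemma av0_4 : av 0 4 = (0 : ℚ) := by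
  simp +decide [av, v3_0, Pi.sub_apply, Pi.add_apply, Pi.smul_apply, smul_eq_mul, Hv1, Hv2, Ev, bvec]
lemma av0_5 : av 0 5 = (-1 : ℚ) := by
  simp +decide [av, v3_0, Pi.sub_apply, Pi.add_apply, Pi.smul_apply, smul_eq_mul, Hv1, Hv2, Ev, bvec]
lemma av0_6 : av 0 6 = (0 : ℚ) := by
  simp +decide [av, v3_0, Pi.sub_apply, Pi.add_apply, Pi.smul_apply, smul_eq_mul, Hv1, Hv2, Ev, bvec]
lemma av0_7 : av 0 7 = (0 : ℚ) := by
  simp +decide [av, v3_0, Pi.sub_apply, Pi.add_apply, Pi.smul_apply, smul_eq_mul, Hv1, Hv2, Ev, bvec]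
lemma av0_8 : av 0 8 = (0 : ℚ) := by
  simp +decide [av, v3_0, Pi.sub_apply, Pi.add_apply, Pi.smul_apply, smul_eq_mul, Hv1, Hv2, Ev, bvec]
lemma av0_9 : av 0 9 = (0 : ℚ) := by
  simp +decide [av, v3_0, Pi.sub_apply, Pi.add_apply, Pi.smul_apply, smul_eq_mul, Hv1, Hv2, Ev, bvec]
lemma av1_0 : av 1 0 = (0 : ℚ) := by
  simp +decide [av, v3_1, Pi.sub_apply, Pi.add_apply, Pi.smul_apply, smul_eq_mul, Hv1, Hv2, Ev, bvec]
lemma av1_1 : av 1 1 = (1 : ℚ) := by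
  simp +decide [av, v3_1, Pi.sub_apply, Pi.add_apply, Pi.smul_apply, smul_eq_mul, Hv1, Hv2, Ev, bvec]
lemma av1_2 : av 1 2 = (0 : ℚ) := by
  simp +decide [av, v3_1, Pi.sub_apply, Pi.add_apply, Pi.smul_apply, smul_eq_mul, Hv1, Hv2, Ev, bvec]
lemma av1_3 : av 1 3 = (-1 : ℚ) := by
  simp +decide [av, v3_1, Pi.sub_apply, Pi.add_apply, Pi.smul_apply, smul_eq_mul, Hv1, Hv2, Ev, bvec]
lemma av1_4 : av 1 4 = (0 : ℚ) := by
  simp +decide [av, v3_1, Pi.sub_apply, Pi.add_apply, Pi.smul_apply, smul_eq_mul, Hv1, Hv2, Ev, bvec]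
lemma av1_5 : av 1 5 = (0 : ℚ) := by
  simp +decide [av, v3_1, Pi.sub_apply, Pi.add_apply, Pi.smul_apply, smul_eq_mul, Hv1, Hv2, Ev, bvec]
lemma av1_6 : av 1 6 = (-1 : ℚ) := by
  simp +decide [av, v3_1, Pi.sub_apply, Pi.add_apply, Pi.smul_apply, smul_eq_mul, Hv1, Hv2, Ev, bvec]
lemma av1_7 : av 1 7 = (0 : ℚ) := by
  simp +decide [av, v3_1, Pi.sub_apply, Pi.add_apply, Pi.smul_apply, smul_eq_mul, Hv1, Hv2, Ev, bvec]
lemma av1_8 : av 1 8 = (0 : ℚ) := by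
  simp +decide [av, v3_1, Pi.sub_apply, Pi.add_apply, Pi.smul_apply, smul_eq_mul, Hv1, Hv2, Ev, bvec]
lemma av1_9 : av 1 9 = (0 : ℚ) := by
  simp +decide [av, v3_1, Pi.sub_apply, Pi.add_apply, Pi.smul_apply, smul_eq_mul, Hv1, Hv2, Ev, bvec]
lemma av2_0 : av 2 0 = (1 : ℚ) := by
  simp +decide [av, v3_2, Pi.sub_apply, Pi.add_apply, Pi.smul_apply, smul_eq_mul, Hv1, Hv2, Ev, bvec]
lemma av2_1 : av 2 1 = (1 : ℚ) := by
  simp +decide [av, v3_2, Pi.sub_apply, Pi.add_apply, Pi.smul_apply, smul_eq_mul, Hv1, Hv2, Ev, bvec]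
lemma av2_2 : av 2 2 = (0 : ℚ) := by
  simp +decide [av, v3_2, Pi.sub_apply, Pi.add_apply, Pi.smul_apply, smul_eq_mul, Hv1, Hv2, Ev, bvec]
lemma av2_3 : av 2 3 = (0 : ℚ) := by
  simp +decide [av, v3_2, Pi.sub_apply, Pi.add_apply, Pi.smul_apply, smul_eq_mul, Hv1, Hv2, Ev, bvec]
lemma av2_4 : av 2 4 = (-1 : ℚ) := by
  simp +decide [av, v3_2, Pi.sub_apply, Pi.add_apply, Pi.smul_apply, smul_eq_mul, Hv1, Hv2, Ev, bvec]
lemma av2_5 : av 2 5 = (0 : ℚ) := by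
  simp +decide [av, v3_2, Pi.sub_apply, Pi.add_apply, Pi.smul_apply, smul_eq_mul, Hv1, Hv2, Ev, bvec]
lemma av2_6 : av 2 6 = (0 : ℚ) := by
  simp +decide [av, v3_2, Pi.sub_apply, Pi.add_apply, Pi.smul_apply, smul_eq_mul, Hv1, Hv2, Ev, bvec]
lemma av2_7 : av 2 7 = (-1 : ℚ) := by
  simp +decide [av, v3_2, Pi.sub_apply, Pi.add_apply, Pi.smul_apply, smul_eq_mul, Hv1, Hv2, Ev, bvec]
lemma av2_8 : av 2 8 = (-1 : ℚ) := by
  simp +decide [av, v3_2, Pi.sub_apply, Pi.add_apply, Pi.smul_apply, smul_eq_mul, Hv1, Hv2, Ev, bvec]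
lemma av2_9 : av 2 9 = (-1 : ℚ) := by
  simp +decide [av, v3_2, Pi.sub_apply, Pi.add_apply, Pi.smul_apply, smul_eq_mul, Hv1, Hv2, Ev, bvec]
lemma bt0_0 : btv 0 0 = (1 : ℚ) := by
  simp +decide [btv, v2_0, Pi.sub_apply, Pi.add_apply, Pi.smul_apply, smul_eq_mul, Hv1, Hv2, Ev, bvec]
lemma bt0_1 : btv 0 1 = (1 : ℚ) := by
  simp +decide [btv, v2_0, Pi.sub_apply, Pi.add_apply, Pi.smul_apply, smul_eq_mul, Hv1, Hv2, Ev, bvec]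
lemma bt0_2 : btv 0 2 = (0 : ℚ) := by
  simp +decide [btv, v2_0, Pi.sub_apply, Pi.add_apply, Pi.smul_apply, smul_eq_mul, Hv1, Hv2, Ev, bvec]
lemma bt0_3 : btv 0 3 = (-1 : ℚ) := by
  simp +decide [btv, v2_0, Pi.sub_apply, Pi.add_apply, Pi.smul_apply, smul_eq_mul, Hv1, Hv2, Ev, bvec]
lemma bt0_4 : btv 0 4 = (0 : ℚ) := by
  simp +decide [btv, v2_0, Pi.sub_apply, Pi.add_apply, Pi.smul_apply, smul_eq_mul, Hv1, Hv2, Ev, bvec]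
lemma bt0_5 : btv 0 5 = (-1 : ℚ) := by
  simp +decide [btv, v2_0, Pi.sub_apply, Pi.add_apply, Pi.smul_apply, smul_eq_mul, Hv1, Hv2, Ev, bvec]
lemma bt0_6 : btv 0 6 = (0 : ℚ) := by
  simp +decide [btv, v2_0, Pi.sub_apply, Pi.add_apply, Pi.smul_apply, smul_eq_mul, Hv1, Hv2, Ev, bvec]
lemma bt0_7 : btv 0 7 = (-1 : ℚ) := by
  simp +decide [btv, v2_0, Pi.sub_apply, Pi.add_apply, Pi.smul_apply, smul_eq_mul, Hv1, Hv2, Ev, bvec]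
lemma bt0_8 : btv 0 8 = (0 : ℚ) := by
  simp +decide [btv, v2_0, Pi.sub_apply, Pi.add_apply, Pi.smul_apply, smul_eq_mul, Hv1, Hv2, Ev, bvec]
lemma bt0_9 : btv 0 9 = (-1 : ℚ) := by
  simp +decide [btv, v2_0, Pi.sub_apply, Pi.add_apply, Pi.smul_apply, smul_eq_mul, Hv1, Hv2, Ev, bvec]
lemma bt1_0 : btv 1 0 = (1 : ℚ) := by
  simp +decide [btv, v2_1, Pi.sub_apply, Pi.add_apply, Pi.smul_apply, smul_eq_mul, Hv1, Hv2, Ev, bvec]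
lemma bt1_1 : btv 1 1 = (1 : ℚ) := by
  simp +decide [btv, v2_1, Pi.sub_apply, Pi.add_apply, Pi.smul_apply, smul_eq_mul, Hv1, Hv2, Ev, bvec]
lemma bt1_2 : btv 1 2 = (-1 : ℚ) := by
  simp +decide [btv, v2_1, Pi.sub_apply, Pi.add_apply, Pi.smul_apply, smul_eq_mul, Hv1, Hv2, Ev, bvec]
lemma bt1_3 : btv 1 3 = (0 : ℚ) := by
  simp +decide [btv, v2_1, Pi.sub_apply, Pi.add_apply, Pi.smul_apply, smul_eq_mul, Hv1, Hv2, Ev, bvec]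
lemma bt1_4 : btv 1 4 = (-1 : ℚ) := by
  simp +decide [btv, v2_1, Pi.sub_apply, Pi.add_apply, Pi.smul_apply, smul_eq_mul, Hv1, Hv2, Ev, bvec]
lemma bt1_5 : btv 1 5 = (0 : ℚ) := by
  simp +decide [btv, v2_1, Pi.sub_apply, Pi.add_apply, Pi.smul_apply, smul_eq_mul, Hv1, Hv2, Ev, bvec]
lemma bt1_6 : btv 1 6 = (-1 : ℚ) := by
  simp +decide [btv, v2_1, Pi.sub_apply, Pi.add_apply, Pi.smul_apply, smul_eq_mul, Hv1, Hv2, Ev, bvec]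
lemma bt1_7 : btv 1 7 = (0 : ℚ) := by
  simp +decide [btv, v2_1, Pi.sub_apply, Pi.add_apply, Pi.smul_apply, smul_eq_mul, Hv1, Hv2, Ev, bvec]
lemma bt1_8 : btv 1 8 = (-1 : ℚ) := by
  simp +decide [btv, v2_1, Pi.sub_apply, Pi.add_apply, Pi.smul_apply, smul_eq_mul, Hv1, Hv2, Ev, bvec]
lemma bt1_9 : btv 1 9 = (0 : ℚ) := by
  simp +decide [btv, v2_1, Pi.sub_apply, Pi.add_apply, Pi.smul_apply, smul_eq_mul, Hv1, Hv2, Ev, bvec]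
lemma aK_0 : antiK 0 = (2 : ℚ) := by
  rw [antiK]
  simp +decide [Pi.sub_apply, Pi.add_apply, Pi.smul_apply, smul_eq_mul, Finset.sum_apply, s8, Ev, Hv1, Hv2, bvec]
  try norm_num
lemma aK_1 : antiK 1 = (2 : ℚ) := by
  rw [antiK]
  simp +decide [Pi.sub_apply, Pi.add_apply, Pi.smul_apply, smul_eq_mul, Finset.sum_apply, s8, Ev, Hv1, Hv2, bvec]
  try norm_num
lemma aK_2 : antiK 2 = (-1 : ℚ) := by
  rw [antiK]
  simp +decide [Pi.sub_apply, Pi.add_apply, Pi.smul_apply, smul_eq_mul, Finset.sum_apply, s8, Ev, Hv1, Hv2, bvec]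
  try norm_num
lemma aK_3 : antiK 3 = (-1 : ℚ) := by
  rw [antiK]
  simp +decide [Pi.sub_apply, Pi.add_apply, Pi.smul_apply, smul_eq_mul, Finset.sum_apply, s8, Ev, Hv1, Hv2, bvec]
  try norm_num
lemma aK_4 : antiK 4 = (-1 : ℚ) := by
  rw [antiK]
  simp +decide [Pi.sub_apply, Pi.add_apply, Pi.smul_apply, smul_eq_mul, Finset.sum_apply, s8, Ev, Hv1, Hv2, bvec]
  try norm_num
lemma aK_5 : antiK 5 = (-1 : ℚ) := by
  rw [antiK]
  simp +decide [Pi.sub_apply, Pi.add_apply, Pi.smul_apply, smul_eq_mul, Finset.sum_apply, s8, Ev, Hv1, Hv2, bvec]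
  try norm_num
lemma aK_6 : antiK 6 = (-1 : ℚ) := by
  rw [antiK]
  simp +decide [Pi.sub_apply, Pi.add_apply, Pi.smul_apply, smul_eq_mul, Finset.sum_apply, s8, Ev, Hv1, Hv2, bvec]
  try norm_num
lemma aK_7 : antiK 7 = (-1 : ℚ) := by
  rw [antiK]
  simp +decide [Pi.sub_apply, Pi.add_apply, Pi.smul_apply, smul_eq_mul, Finset.sum_apply, s8, Ev, Hv1, Hv2, bvec]
  try norm_num
lemma aK_8 : antiK 8 = (-1 : ℚ) := by
  rw [antiK]
  simp +decide [Pi.sub_apply, Pi.add_apply, Pi.smul_apply, smul_eq_mul, Finset.sum_apply, s8, Ev, Hv1, Hv2, bvec]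
  try norm_num
lemma aK_9 : antiK 9 = (-1 : ℚ) := by
  rw [antiK]
  simp +decide [Pi.sub_apply, Pi.add_apply, Pi.smul_apply, smul_eq_mul, Finset.sum_apply, s8, Ev, Hv1, Hv2, bvec]
  try norm_num
lemma ext10 {f g : PicX} (h0 : f 0 = g 0) (h1 : f 1 = g 1) (h2 : f 2 = g 2)
    (h3 : f 3 = g 3) (h4 : f 4 = g 4) (h5 : f 5 = g 5) (h6 : f 6 = g 6)
    (h7 : f 7 = g 7) (h8 : f 8 = g 8) (h9 : f 9 = g 9) : f = g := by
  funext j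
  fin_cases j
  exacts [h0, h1, h2, h3, h4, h5, h6, h7, h8, h9]
lemma p40 (v : PicX) : sigMap (sRef (av 0) v) = sRef (av 1) (sigMap v) := by
  apply ext10 <;>
  · simp only [sRef, Pi.sub_apply, Pi.smul_apply, smul_eq_mul, IB_eq, sig0, sig1, sig2, sig3, sig4, sig5, sig6, sig7, sig8, sig9, av0_0, av1_0, av2_0, bt0_0, bt1_0, av0_1, av1_1, av2_1, bt0_1, bt1_1, av0_2, av1_2, av2_2, bt0_2, bt1_2, av0_3, av1_3, av2_3, bt0_3, bt1_3, av0_4, av1_4, av2_4, bt0_4, bt1_4, av0_5, av1_5, av2_5, bt0_5, bt1_5, av0_6, av1_6, av2_6, bt0_6, bt1_6, av0_7, av1_7, av2_7, bt0_7, bt1_7, av0_8, av1_8, av2_8, bt0_8, bt1_8, av0_9, av1_9, av2_9, bt0_9, bt1_9, ]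
    norm_num
    try ring
lemma p41 (v : PicX) : sigMap (sRef (av 1) v) = sRef (av 2) (sigMap v) := by
  apply ext10 <;>
  · simp only [sRef, Pi.sub_apply, Pi.smul_apply, smul_eq_mul, IB_eq, sig0, sig1, sig2, sig3, sig4, sig5, sig6, sig7, sig8, sig9, av0_0, av1_0, av2_0, bt0_0, bt1_0, av0_1, av1_1, av2_1, bt0_1, bt1_1, av0_2, av1_2, av2_2, bt0_2, bt1_2, av0_3, av1_3, av2_3, bt0_3, bt1_3, av0_4, av1_4, av2_4, bt0_4, bt1_4, av0_5, av1_5, av2_5, bt0_5, bt1_5, av0_6, av1_6, av2_6, bt0_6, bt1_6, av0_7, av1_7, av2_7, bt0_7, bt1_7, av0_8, av1_8, av2_8, bt0_8, bt1_8, av0_9, av1_9, av2_9, bt0_9, bt1_9, ]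
    norm_num
    try ring
lemma p42 (v : PicX) : sigMap (sRef (av 2) v) = sRef (av 0) (sigMap v) := by
  apply ext10 <;>
  · simp only [sRef, Pi.sub_apply, Pi.smul_apply, smul_eq_mul, IB_eq, sig0, sig1, sig2, sig3, sig4, sig5, sig6, sig7, sig8, sig9, av0_0, av1_0, av2_0, bt0_0, bt1_0, av0_1, av1_1, av2_1, bt0_1, bt1_1, av0_2, av1_2, av2_2, bt0_2, bt1_2, av0_3, av1_3, av2_3, bt0_3, bt1_3, av0_4, av1_4, av2_4, bt0_4, bt1_4, av0_5, av1_5, av2_5, bt0_5, bt1_5, av0_6, av1_6, av2_6, bt0_6, bt1_6, av0_7, av1_7, av2_7, bt0_7, bt1_7, av0_8, av1_8, av2_8, bt0_8, bt1_8, av0_9, av1_9, av2_9, bt0_9, bt1_9, ]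
    norm_num
    try ring
lemma p50 (v : PicX) : sigMap (sRef (btv 0) v) = sRef (btv 1) (sigMap v) := by
  apply ext10 <;>
  · simp only [sRef, Pi.sub_apply, Pi.smul_apply, smul_eq_mul, IB_eq, sig0, sig1, sig2, sig3, sig4, sig5, sig6, sig7, sig8, sig9, av0_0, av1_0, av2_0, bt0_0, bt1_0, av0_1, av1_1, av2_1, bt0_1, bt1_1, av0_2, av1_2, av2_2, bt0_2, bt1_2, av0_3, av1_3, av2_3, bt0_3, bt1_3, av0_4, av1_4, av2_4, bt0_4, bt1_4, av0_5, av1_5, av2_5, bt0_5, bt1_5, av0_6, av1_6, av2_6, bt0_6, bt1_6, av0_7, av1_7, av2_7, bt0_7, bt1_7, av0_8, av1_8, av2_8, bt0_8, bt1_8, av0_9, av1_9, av2_9, bt0_9, bt1_9, ]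
    norm_num
    try ring
lemma p51 (v : PicX) : sigMap (sRef (btv 1) v) = sRef (btv 0) (sigMap v) := by
  apply ext10 <;>
  · simp only [sRef, Pi.sub_apply, Pi.smul_apply, smul_eq_mul, IB_eq, sig0, sig1, sig2, sig3, sig4, sig5, sig6, sig7, sig8, sig9, av0_0, av1_0, av2_0, bt0_0, bt1_0, av0_1, av1_1, av2_1, bt0_1, bt1_1, av0_2, av1_2, av2_2, bt0_2, bt1_2, av0_3, av1_3, av2_3, bt0_3, bt1_3, av0_4, av1_4, av2_4, bt0_4, bt1_4, av0_5, av1_5, av2_5, bt0_5, bt1_5, av0_6, av1_6, av2_6, bt0_6, bt1_6, av0_7, av1_7, av2_7, bt0_7, bt1_7, av0_8, av1_8, av2_8, bt0_8, bt1_8, av0_9, av1_9, av2_9, bt0_9, bt1_9, ]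
    norm_num
    try ring

/-- The reflections `sᵢ` (for `α₀,α₁,α₂`) and `wⱼ` (for `β₀,β₁`), together with the
lattice automorphism `σ`, satisfy: `σ` preserves the intersection form and the
anti-canonical class, `σ⁶ = 1`, `sᵢσ = σs_{i+1}` (indices mod 3), and
`wⱼσ = σw_{j+1}` (indices mod 2), as right actions on `Pic(X)`. -/
theorem stmt_16 :
    (∀ u v : PicX, IB (sigMap u) (sigMap v) = IB u v) ∧
    sigMap antiK = antiK ∧
    sigMap^[6] = id ∧
    (∀ (i : Fin 3) (v : PicX), sigMap (sRef (av i) v) = sRef (av (i + 1)) (sigMap v)) ∧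
    (∀ (j : Fin 2) (v : PicX), sigMap (sRef (btv j) v) = sRef (btv (j + 1)) (sigMap v)) := by
  refine ⟨?_, ?_, ?_, ?_, ?_⟩
  · intro u v
    simp only [IB_eq, sig0, sig1, sig2, sig3, sig4, sig5, sig6, sig7, sig8, sig9]
    ring
  · apply ext10 <;> simp only [sig0, sig1, sig2, sig3, sig4, sig5, sig6, sig7, sig8, sig9, aK_0, aK_1, aK_2, aK_3, aK_4, aK_5, aK_6, aK_7, aK_8, aK_9,  aK_0] <;> norm_num
  · funext v
    show sigMap (sigMap (sigMap (sigMap (sigMap (sigMap v))))) = v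
    apply ext10 <;> simp only [sig0, sig1, sig2, sig3, sig4, sig5, sig6, sig7, sig8, sig9] <;> try ring
  · intro i v
    fin_cases i
    exacts [p40 v, p41 v, p42 v]
  · intro j v
    fin_cases j
    exacts [p50 v, p51 v]

end
end
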